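/- For nonnegative integers i ≥ j and r ≥ 0, [i+r, j+r]_r = Σ_{k=j}^{i} (-1)^{k-j} C(k,j) [i+r+1, k+r+1]_{r+1}, where [n,m]_r denotes the unsigned r-Stirling number of the first kind. -/

import Mathlib

open Finset

/-- The unsigned `r`-Stirling numbers of the first kind: `rS1 r i j = [i+r, j+r]_r`,
characterized by `∑_j [i+r, j+r]_r x^j = (x+r)(x+r+1)⋯(x+r+i-1)`. -/
def rS1 (r : ℕ) : ℕ → ℕ → ℕ
  | 0, 0 => 1
  | 0, _ + 1 => 0
  | i + 1, 0 => (r + i) * rS1 r i 0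
  | i + 1, j + 1 => (r + i) * rS1 r i (j + 1) + rS1 r i j

lemma rS1_zero_of_lt (r : ℕ) : ∀ i j, i < j → rS1 r i j = 0 := by
  intro i
  induction i with
  | zero => intro j h; match j, h with | j+1, _ => rfl
  | succ i ih =>
    intro j h
    match j, h with
    | j+1, h =>
      simp only [rS1, ih (j+1) (by omega), ih j (by omega)]
      ring

lemma aux1 : ∀ i : ℕ, ∀ j r : ℕ, j ≤ i →
    (rS1 r i j : ℤ) = ∑ d ∈ range (i + 1 - j),
      (-1 : ℤ)^d * ((j + d).choose j : ℤ) * (rS1 (r+1) i (j+d) : ℤ) := by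
  intro i
  induction i with
  | zero =>
    intro j r h
    interval_cases j
    simp [rS1]
  | succ i ih =>
    intro j r h
    match j, h with
    | 0, h =>
      simp only [Nat.zero_add, Nat.choose_zero_right, Nat.cast_one, mul_one, Nat.sub_zero]
      have hT : (rS1 r i 0 : ℤ) = ∑ d ∈ range (i+1), (-1:ℤ)^d * (rS1 (r+1) i d : ℤ) := by
        simpa using ih 0 r (by omega)
      have hU : ∑ d ∈ range (i+1), (-1:ℤ)^(d+1) * (rS1 (r+1) i (d+1) : ℤ)
          = (∑ d ∈ range (i+1), (-1:ℤ)^d * (rS1 (r+1) i d : ℤ)) - (rS1 (r+1) i 0 : ℤ) := by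
        have h2 := Finset.sum_range_succ' (fun d => (-1:ℤ)^d * (rS1 (r+1) i d : ℤ)) (i+1)
        rw [Finset.sum_range_succ, rS1_zero_of_lt (r+1) i (i+1) (by omega)] at h2
        push_cast at h2
        simp only [add_zero, mul_zero, pow_zero, one_mul] at h2
        linarith [h2]
      rw [Finset.sum_range_succ' (fun d => (-1:ℤ)^d * (rS1 (r+1) (i+1) d : ℤ)) (i+1)]
      have hre : ∀ d ∈ range (i+1), (-1:ℤ)^(d+1) * (rS1 (r+1) (i+1) (d+1) : ℤ)
          = ((r:ℤ)+1+(i:ℤ)) * ((-1:ℤ)^(d+1) * (rS1 (r+1) i (d+1):ℤ))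
            - (-1:ℤ)^d * (rS1 (r+1) i d : ℤ) := by
        intro d _
        simp only [rS1]; push_cast; ring
      rw [Finset.sum_congr rfl hre, Finset.sum_sub_distrib, ← Finset.mul_sum, hU]
      simp only [rS1]
      push_cast
      rw [hT]
      ring
    | j+1, h =>
      have hji : j ≤ i := by omega
      have hb : i + 1 + 1 - (j + 1) = (i - j) + 1 := by omega
      rw [hb]
      -- key partial sum
      have hS1 : ∑ d ∈ range (i - j),
            (-1:ℤ)^d * ((j+1+d).choose (j+1):ℤ) * (rS1 (r+1) i (j+1+d):ℤ)
          = (rS1 r i (j+1) : ℤ) := by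
        rcases Nat.lt_or_ge j i with hj | hj
        · have h2 := ih (j+1) r hj
          have hb2 : i + 1 - (j + 1) = i - j := by omega
          rw [hb2] at h2
          exact h2.symm
        · have hij : j = i := by omega
          subst hij
          simp [rS1_zero_of_lt r j (j+1) (by omega)]
      have hSA : ∑ d ∈ range ((i - j) + 1),
            (-1:ℤ)^d * ((j+1+d).choose (j+1):ℤ) * (rS1 (r+1) (i+1) (j+1+d):ℤ)
          = ((r:ℤ)+1+(i:ℤ)) * (rS1 r i (j+1) : ℤ) + (rS1 r i j : ℤ)
            - (rS1 r i (j+1) : ℤ) := by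
        have hre : ∀ d ∈ range ((i - j) + 1),
            (-1:ℤ)^d * ((j+1+d).choose (j+1):ℤ) * (rS1 (r+1) (i+1) (j+1+d):ℤ)
            = ((r:ℤ)+1+(i:ℤ)) * ((-1:ℤ)^d * ((j+1+d).choose (j+1):ℤ) * (rS1 (r+1) i (j+1+d):ℤ))
              + (-1:ℤ)^d * ((j+d).choose j:ℤ) * (rS1 (r+1) i (j+d):ℤ)
              + (-1:ℤ)^d * ((j+d).choose (j+1):ℤ) * (rS1 (r+1) i (j+d):ℤ) := by
          intro d _
          have e1 : j + 1 + d = (j + d) + 1 := by omega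
          rw [e1, Nat.choose_succ_succ]
          simp only [rS1]
          push_cast
          ring
        rw [Finset.sum_congr rfl hre, Finset.sum_add_distrib, Finset.sum_add_distrib,
          ← Finset.mul_sum]
        -- first sum: = hS1 sum + vanishing last term
        have e2 : ∑ d ∈ range ((i - j) + 1),
              (-1:ℤ)^d * ((j+1+d).choose (j+1):ℤ) * (rS1 (r+1) i (j+1+d):ℤ)
            = (rS1 r i (j+1) : ℤ) := by
          rw [Finset.sum_range_succ, rS1_zero_of_lt (r+1) i (j+1+(i-j)) (by omega), hS1]
          simp
        -- second sum: IH at j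
        have e3 : ∑ d ∈ range ((i - j) + 1),
              (-1:ℤ)^d * ((j+d).choose j:ℤ) * (rS1 (r+1) i (j+d):ℤ)
            = (rS1 r i j : ℤ) := by
          have h2 := ih j r hji
          have hb2 : i + 1 - j = (i - j) + 1 := by omega
          rw [hb2] at h2
          exact h2.symm
        -- third sum: peel first (zero) term, shift, negate
        have e4 : ∑ d ∈ range ((i - j) + 1),
              (-1:ℤ)^d * ((j+d).choose (j+1):ℤ) * (rS1 (r+1) i (j+d):ℤ)
            = -(rS1 r i (j+1) : ℤ) := by
          rw [Finset.sum_range_succ'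
            (fun d => (-1:ℤ)^d * ((j+d).choose (j+1):ℤ) * (rS1 (r+1) i (j+d):ℤ)) (i-j)]
          simp only [Nat.choose_self, Nat.choose_succ_self, Nat.cast_zero, mul_zero, zero_mul,
            add_zero, pow_zero, one_mul]
          rw [← hS1, ← Finset.sum_neg_distrib]
          refine Finset.sum_congr rfl fun d _ => ?_
          have e5 : j + (d + 1) = j + 1 + d := by omega
          rw [e5]
          ring
        rw [e2, e3, e4]; ring
      rw [hSA]
      simp only [rS1]
      push_cast
      ring

theorem rStirlingFirst_alternating_recurrence (i j r : ℕ) (hij : j ≤ i) :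
    (rS1 r i j : ℤ) =
      ∑ k ∈ Finset.Icc j i, (-1) ^ (k - j) * (k.choose j : ℤ) * (rS1 (r + 1) i k : ℤ) := by
  have hmap : Finset.Icc j i = (Finset.range (i + 1 - j)).map
      ⟨fun d => j + d, show Function.Injective (fun d => j + d) from fun a b hab => by dsimp at hab; omega⟩ := by
    ext k
    simp only [Finset.mem_Icc, Finset.mem_map, Finset.mem_range, Function.Embedding.coeFn_mk]
    constructor
    · intro hk; exact ⟨k - j, by omega, by omega⟩
    · rintro ⟨d, hd, rfl⟩; omega
  rw [hmap, Finset.sum_map, aux1 i j r hij]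
  refine Finset.sum_congr rfl fun d _ => ?_
  simp only [Function.Embedding.coeFn_mk, Nat.add_sub_cancel_left]
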